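/- Let λ, μ_a, μ_b, γ > 0 and let (p_n)_{n≥1} be a sequence with p_n ∈ [0,1] for all n and p_n → 0 as n → ∞. Suppose (π_n^a)_{n≥1} and (π_n^b)_{n≥1} are strictly positive sequences satisfying, for all n ≥ 1, π_{n+1}^a = (λ/D_{n+1}) ( (γ + μ_b + λ p_{n+1}) π_n^a + (γ + λ p_{n+1}) π_n^b ) and π_{n+1}^b = (λ/D_{n+1}) ( λ (1 − p_{n+1}) π_n^a + (μ_a + λ (1 − p_{n+1})) π_n^b ), where D_{n+1} := μ_a μ_b + μ_a(γ + λ p_{n+1}) + λ μ_b (1 − p_{n+1}). Then the ratio π_n^a/π_n^b converges as n → ∞ to η := (√Δ + γ − λ + μ_b − μ_a)/(2λ), where Δ := (λ − γ + μ_a − μ_b)² + 4λγ; equivalently, η is the unique nonnegative root of λ x² + (μ_a + λ − γ − μ_b) x − γ = 0. -/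

import Mathlib

open Filter

/-- If `e (n+1) ≤ k e n + c n` eventually, with `0 ≤ k < 1`, `e, c ≥ 0`, `c → 0`,
then `e → 0`. -/
lemma contract_tendsto_zero (k : ℝ) (hk0 : 0 ≤ k) (hk1 : k < 1)
    (e c : ℕ → ℝ) (he0 : ∀ n, 0 ≤ e n) (hc0 : ∀ n, 0 ≤ c n)
    (hc : Tendsto c atTop (nhds 0))
    (N₀ : ℕ) (hrec : ∀ n, N₀ ≤ n → e (n + 1) ≤ k * e n + c n) :
    Tendsto e atTop (nhds 0) := by
  rw [Metric.tendsto_atTop]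
  intro ε hε
  have hδpos : 0 < ε / 3 := by positivity
  obtain ⟨N₂, hN₂⟩ := Metric.tendsto_atTop.mp hc ((1 - k) * (ε / 3)) (by nlinarith)
  set N := max N₀ N₂ with hN
  have key : ∀ m, e (N + m) ≤ k ^ m * e N + ε / 3 := by
    intro m
    induction m with
    | zero => simpa using by linarith [he0 N]
    | succ m ih =>
      have h1 := hrec (N + m) (le_trans (le_max_left _ _) (Nat.le_add_right _ _))
      have h2 := hN₂ (N + m) (le_trans (le_max_right _ _) (Nat.le_add_right _ _))
      rw [Real.dist_eq, sub_zero] at h2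
      have h3 : c (N + m) ≤ (1 - k) * (ε / 3) := (le_abs_self _).trans h2.le
      have h4 : k * e (N + m) ≤ k * (k ^ m * e N + ε / 3) :=
        mul_le_mul_of_nonneg_left ih hk0
      have : e (N + (m + 1)) = e ((N + m) + 1) := by ring_nf
      rw [this]
      calc e ((N + m) + 1) ≤ k * e (N + m) + c (N + m) := h1
        _ ≤ k * (k ^ m * e N + ε / 3) + (1 - k) * (ε / 3) := by linarith
        _ = k ^ (m + 1) * e N + ε / 3 := by ring
  have hpow : Tendsto (fun m => k ^ m * e N) atTop (nhds 0) := by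
    simpa using (tendsto_pow_atTop_nhds_zero_of_lt_one hk0 hk1).mul_const (e N)
  obtain ⟨m₀, hm₀⟩ := Metric.tendsto_atTop.mp hpow (ε / 3) hδpos
  refine ⟨N + m₀, fun n hn => ?_⟩
  obtain ⟨m, hm₀m, rfl⟩ : ∃ m, m₀ ≤ m ∧ n = N + m := ⟨n - N, by omega, by omega⟩
  have h4 := key m
  have h5 : k ^ m * e N ≤ k ^ m₀ * e N :=
    mul_le_mul_of_nonneg_right (pow_le_pow_of_le_one hk0 hk1.le hm₀m) (he0 N)
  have h6 : k ^ m₀ * e N < ε / 3 := by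
    have := hm₀ m₀ le_rfl
    rw [Real.dist_eq, sub_zero] at this
    exact (le_abs_self _).trans_lt this
  rw [Real.dist_eq, sub_zero, abs_of_nonneg (he0 _)]
  linarith

/-- One-step contraction-plus-perturbation bound for the Möbius iteration. -/
lemma step_bound (lam μa μb γ η q r : ℝ)
    (hlam : 0 < lam) (hμa : 0 < μa) (hμb : 0 < μb) (hγ : 0 < γ)
    (hroot : lam * η ^ 2 + (μa + lam - γ - μb) * η - γ = 0)
    (hk0 : 0 ≤ γ + μb - lam * η)
    (hq0 : 0 ≤ q) (hq : q ≤ 1 / 2) (hr : 0 ≤ r) :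
    |((γ + μb + lam * q) * r + (γ + lam * q))
        / (lam * (1 - q) * r + (μa + lam * (1 - q))) - η|
      ≤ (γ + μb - lam * η) / (μa + lam) * |r - η|
        + 2 * (2 * lam + μa + μb + 2 * γ) / lam * q := by
  have hr1 : (0:ℝ) < r + 1 := by linarith
  have h1q : (0:ℝ) ≤ 1 - q := by linarith
  have hDp_pos : 0 < lam * (1 - q) * r + (μa + lam * (1 - q)) := by
    nlinarith [mul_nonneg (mul_nonneg hlam.le h1q) hr, mul_nonneg hlam.le h1q]
  have hDp_lb : lam / 2 * (r + 1) ≤ lam * (1 - q) * r + (μa + lam * (1 - q)) := by nlinarith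
  have hD0_pos : 0 < lam * r + (μa + lam) := by nlinarith
  have hD0_lb : lam * (r + 1) ≤ lam * r + (μa + lam) := by linarith
  have key1 : ((γ + μb + lam * q) * r + (γ + lam * q))
        / (lam * (1 - q) * r + (μa + lam * (1 - q)))
      - ((γ + μb) * r + γ) / (lam * r + (μa + lam))
      = (lam * q * (r + 1)) * ((lam * r + (μa + lam)) + ((γ + μb) * r + γ))
        / ((lam * (1 - q) * r + (μa + lam * (1 - q))) * (lam * r + (μa + lam))) := by
    field_simp
    ring
  have key2 : ((γ + μb) * r + γ) / (lam * r + (μa + lam)) - η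
      = ((γ + μb - lam * η) * (r - η)) / (lam * r + (μa + lam)) := by
    field_simp
    linear_combination -hroot
  have tri : |((γ + μb + lam * q) * r + (γ + lam * q))
        / (lam * (1 - q) * r + (μa + lam * (1 - q))) - η|
      ≤ |((γ + μb + lam * q) * r + (γ + lam * q))
        / (lam * (1 - q) * r + (μa + lam * (1 - q)))
          - ((γ + μb) * r + γ) / (lam * r + (μa + lam))|
      + |((γ + μb) * r + γ) / (lam * r + (μa + lam)) - η| := abs_sub_le _ _ _
  have hnum0 : 0 ≤ (lam * q * (r + 1)) * ((lam * r + (μa + lam)) + ((γ + μb) * r + γ)) := by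
    have h := mul_nonneg (mul_nonneg hlam.le hq0) hr1.le
    nlinarith [mul_nonneg h hr, h, mul_nonneg hr (by positivity : (0:ℝ) ≤ γ + μb)]
  have b1 : |((γ + μb + lam * q) * r + (γ + lam * q))
        / (lam * (1 - q) * r + (μa + lam * (1 - q)))
          - ((γ + μb) * r + γ) / (lam * r + (μa + lam))|
      ≤ 2 * (2 * lam + μa + μb + 2 * γ) / lam * q := by
    rw [key1, abs_of_nonneg (by positivity)]
    have hnum : (lam * q * (r + 1)) * ((lam * r + (μa + lam)) + ((γ + μb) * r + γ))
        ≤ (lam * q * (r + 1)) * ((2 * lam + μa + μb + 2 * γ) * (r + 1)) := by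
      apply mul_le_mul_of_nonneg_left _ (by positivity)
      nlinarith
    have hden : (lam / 2 * (r + 1)) * (lam * (r + 1))
        ≤ (lam * (1 - q) * r + (μa + lam * (1 - q))) * (lam * r + (μa + lam)) :=
      mul_le_mul hDp_lb hD0_lb (by positivity) hDp_pos.le
    have h := div_le_div₀ (by positivity) hnum (by positivity) hden
    refine h.trans_eq ?_
    field_simp
  have b2 : |((γ + μb) * r + γ) / (lam * r + (μa + lam)) - η|
      ≤ (γ + μb - lam * η) / (μa + lam) * |r - η| := by
    rw [key2, abs_div, abs_mul, abs_of_nonneg hk0, abs_of_pos hD0_pos,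
      div_mul_eq_mul_div]
    exact div_le_div₀ (mul_nonneg hk0 (abs_nonneg _)) le_rfl (by positivity)
      (by nlinarith [mul_nonneg hlam.le hr])
  linarith

set_option maxHeartbeats 1000000 in
/-- Asymptotics of the ratio `π_n^a/π_n^b` for the two-speed queue recursion:
the ratio converges to `η = (√Δ + γ − λ + μ_b − μ_a)/(2λ)`, the unique
nonnegative root of `λ x² + (μ_a + λ − γ − μ_b) x − γ = 0`. -/
theorem two_speed_queue_ratio_limit
    (lam μa μb γ : ℝ)
    (hlam : 0 < lam) (hμa : 0 < μa) (hμb : 0 < μb) (hγ : 0 < γ)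
    (p : ℕ → ℝ) (hp01 : ∀ n, 1 ≤ n → 0 ≤ p n ∧ p n ≤ 1)
    (hp0 : Filter.Tendsto p Filter.atTop (nhds 0))
    (πa πb : ℕ → ℝ)
    (hπa_pos : ∀ n, 1 ≤ n → 0 < πa n) (hπb_pos : ∀ n, 1 ≤ n → 0 < πb n)
    (hreca : ∀ n, 1 ≤ n →
      πa (n + 1)
        = lam / (μa * μb + μa * (γ + lam * p (n + 1))
            + lam * μb * (1 - p (n + 1)))
          * ((γ + μb + lam * p (n + 1)) * πa n + (γ + lam * p (n + 1)) * πb n))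
    (hrecb : ∀ n, 1 ≤ n →
      πb (n + 1)
        = lam / (μa * μb + μa * (γ + lam * p (n + 1))
            + lam * μb * (1 - p (n + 1)))
          * (lam * (1 - p (n + 1)) * πa n
            + (μa + lam * (1 - p (n + 1))) * πb n)) :
    let Δ := (lam - γ + μa - μb) ^ 2 + 4 * lam * γ
    let η := (Real.sqrt Δ + γ - lam + μb - μa) / (2 * lam)
    Filter.Tendsto (fun n => πa n / πb n) Filter.atTop (nhds η) ∧
    0 ≤ η ∧
    lam * η ^ 2 + (μa + lam - γ - μb) * η - γ = 0 ∧
    (∀ x : ℝ, 0 ≤ x → lam * x ^ 2 + (μa + lam - γ - μb) * x - γ = 0 →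
      x = η) := by
  intro Δ η
  have hΔdef : Δ = (lam - γ + μa - μb) ^ 2 + 4 * lam * γ := rfl
  have hηdef : η = (Real.sqrt Δ + γ - lam + μb - μa) / (2 * lam) := rfl
  clear_value Δ η
  have hΔpos : 0 < Δ := by rw [hΔdef]; positivity
  have hsq : Real.sqrt Δ ^ 2 = Δ := Real.sq_sqrt hΔpos.le
  have hs0 : 0 < Real.sqrt Δ := Real.sqrt_pos.mpr hΔpos
  -- √Δ < T
  have hT : Real.sqrt Δ < lam + μa + γ + μb := by
    rw [Real.sqrt_lt' (by positivity)]
    rw [hΔdef]; nlinarith [mul_pos hμa hγ, mul_pos hμa hμb, mul_pos hlam hμb]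
  -- √Δ > λ + μa − γ − μb  (for η ≥ 0)
  have hlow1 : lam + μa - γ - μb < Real.sqrt Δ := by
    rcases le_or_gt (lam + μa - γ - μb) 0 with h | h
    · linarith
    · rw [Real.lt_sqrt h.le, hΔdef]; nlinarith
  -- √Δ > γ + μb − μa − λ  (for k < 1)
  have hlow2 : γ + μb - μa - lam < Real.sqrt Δ := by
    rcases le_or_gt (γ + μb - μa - lam) 0 with h | h
    · linarith
    · rw [Real.lt_sqrt h.le, hΔdef]; nlinarith
  have hη0 : 0 ≤ η := by
    rw [hηdef]
    apply div_nonneg _ (by positivity)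
    linarith
  have hsq2 : Real.sqrt Δ ^ 2 = (lam - γ + μa - μb) ^ 2 + 4 * lam * γ :=
    hsq.trans hΔdef
  have hE : 2 * lam * η = Real.sqrt Δ + (γ - lam + μb - μa) := by
    rw [hηdef]; field_simp; ring
  have h4 : (4 * lam) * (lam * η ^ 2 + (μa + lam - γ - μb) * η - γ) = 0 := by
    linear_combination (2 * lam * η - (γ - lam + μb - μa) + Real.sqrt Δ) * hE
      + hsq2
  have hroot : lam * η ^ 2 + (μa + lam - γ - μb) * η - γ = 0 :=
    (mul_eq_zero.mp h4).resolve_left (by positivity)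
  have hlamη : lam * η = (Real.sqrt Δ + γ - lam + μb - μa) / 2 := by
    rw [hηdef]; field_simp
  have hk0' : 0 ≤ γ + μb - lam * η := by rw [hlamη]; linarith
  have hk1' : γ + μb - lam * η < μa + lam := by rw [hlamη]; linarith
  have hk0 : 0 ≤ (γ + μb - lam * η) / (μa + lam) := div_nonneg hk0' (by positivity)
  have hk1 : (γ + μb - lam * η) / (μa + lam) < 1 := (div_lt_one (by positivity)).mpr hk1'
  have hC0 : 0 ≤ 2 * (2 * lam + μa + μb + 2 * γ) / lam := by positivity
  refine ⟨?_, hη0, hroot, ?_⟩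
  · -- convergence
    rw [tendsto_iff_norm_sub_tendsto_zero]
    simp only [Real.norm_eq_abs]
    obtain ⟨N₁, hN₁⟩ := Metric.tendsto_atTop.mp hp0 (1 / 2) one_half_pos
    have hcten : Filter.Tendsto
        (fun n => 2 * (2 * lam + μa + μb + 2 * γ) / lam * p (n + 1))
        Filter.atTop (nhds 0) := by
      have h1 : Filter.Tendsto (fun n => p (n + 1)) Filter.atTop (nhds 0) :=
        hp0.comp (tendsto_add_atTop_nat 1)
      simpa using h1.const_mul (2 * (2 * lam + μa + μb + 2 * γ) / lam)
    apply contract_tendsto_zero ((γ + μb - lam * η) / (μa + lam)) hk0 hk1 _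
      (fun n => 2 * (2 * lam + μa + μb + 2 * γ) / lam * p (n + 1))
      (fun n => abs_nonneg _)
      (fun n => mul_nonneg hC0 (hp01 (n + 1) (by omega)).1)
      hcten (N₁ + 1)
    intro n hn
    have hn1 : 1 ≤ n := by omega
    have hq01 := hp01 (n + 1) (by omega)
    have hqh : p (n + 1) ≤ 1 / 2 := by
      have := hN₁ (n + 1) (by omega)
      rw [Real.dist_eq, sub_zero] at this
      exact (le_abs_self _).trans this.le
    have hπa := hπa_pos n hn1
    have hπb := hπb_pos n hn1
    have hr0 : 0 ≤ πa n / πb n := le_of_lt (div_pos hπa hπb)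
    have h1q : (0:ℝ) ≤ 1 - p (n + 1) := by linarith [hq01.2]
    have hDpos : 0 < μa * μb + μa * (γ + lam * p (n + 1))
        + lam * μb * (1 - p (n + 1)) := by
      nlinarith [mul_pos hμa hμb, mul_nonneg hlam.le hq01.1,
        mul_nonneg (mul_nonneg hlam.le hμb.le) h1q, mul_pos hμa hγ]
    have hcne : lam / (μa * μb + μa * (γ + lam * p (n + 1))
        + lam * μb * (1 - p (n + 1))) ≠ 0 := div_ne_zero hlam.ne' hDpos.ne'
    have hB : 0 < lam * (1 - p (n + 1)) * πa n
        + (μa + lam * (1 - p (n + 1))) * πb n := by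
      nlinarith [mul_nonneg (mul_nonneg hlam.le h1q) hπa.le,
        mul_pos hμa hπb, mul_nonneg (mul_nonneg hlam.le h1q) hπb.le]
    have hden : 0 < lam * (1 - p (n + 1)) * (πa n / πb n)
        + (μa + lam * (1 - p (n + 1))) := by
      nlinarith [mul_nonneg (mul_nonneg hlam.le h1q) hr0,
        mul_nonneg hlam.le h1q]
    have hratio : πa (n + 1) / πb (n + 1)
        = ((γ + μb + lam * p (n + 1)) * (πa n / πb n) + (γ + lam * p (n + 1)))
          / (lam * (1 - p (n + 1)) * (πa n / πb n)
            + (μa + lam * (1 - p (n + 1)))) := by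
      rw [hreca n hn1, hrecb n hn1, mul_div_mul_left _ _ hcne,
        div_eq_div_iff hB.ne' hden.ne']
      field_simp
    calc |πa (n + 1) / πb (n + 1) - η|
        = |((γ + μb + lam * p (n + 1)) * (πa n / πb n) + (γ + lam * p (n + 1)))
          / (lam * (1 - p (n + 1)) * (πa n / πb n)
            + (μa + lam * (1 - p (n + 1)))) - η| := by rw [hratio]
      _ ≤ (γ + μb - lam * η) / (μa + lam) * |πa n / πb n - η|
          + 2 * (2 * lam + μa + μb + 2 * γ) / lam * p (n + 1) :=
        step_bound lam μa μb γ η (p (n + 1)) (πa n / πb n)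
          hlam hμa hμb hγ hroot hk0' hq01.1 hqh hr0
  · -- uniqueness
    intro x hx0 hx
    have h1 : (x - η) * (lam * (x + η) + (μa + lam - γ - μb)) = 0 := by
      linear_combination hx - hroot
    rcases mul_eq_zero.mp h1 with h | h
    · exact sub_eq_zero.mp h
    · exfalso
      have h3 : lam * (x * η) + γ = 0 := by linear_combination x * h - hx
      nlinarith [mul_nonneg hlam.le (mul_nonneg hx0 hη0)]
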